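/- arXiv:1710.07406 — 5 statements merged into one kernel-verified Lean document; each statement's English description precedes it below -/
import Mathlib

section
/- Let f be C² with ‖∇²f(x)‖ ≤ L, 0 < α < 1/L, and g the proximal point map. At any strict saddle x* (∇f(x*) = 0, λ_min(∇²f(x*)) = λ < 0), x* is a fixed point of g and Dg(x*) = (I + α∇²f(x*))⁻¹ has an eigenvalue 1/(1+αλ) > 1. -/
open scoped RealInnerProductSpace
theorem stmt_9 {d : ℕ} (f : EuclideanSpace ℝ (Fin d) → ℝ)
    (hf : ContDiff ℝ 2 f) (L α : ℝ)
    (hL : ∀ x, ‖fderiv ℝ (gradient f) x‖ ≤ L)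
    (hα0 : 0 < α) (hα : α < 1 / L)
    (g : EuclideanSpace ℝ (Fin d) → EuclideanSpace ℝ (Fin d))
    (hg : ∀ x, IsMinOn (fun z => f z + (1 / (2 * α)) * ‖x - z‖ ^ 2) Set.univ (g x))
    (xs : EuclideanSpace ℝ (Fin d)) (hcrit : gradient f xs = 0)
    (lam : ℝ) (hlam : lam < 0)
    (v : EuclideanSpace ℝ (Fin d)) (hv : v ≠ 0)
    (heig : fderiv ℝ (gradient f) xs v = lam • v)
    (hmin : ∀ w : EuclideanSpace ℝ (Fin d), lam * ‖w‖ ^ 2 ≤ ⟪fderiv ℝ (gradient f) xs w, w⟫) :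
    g xs = xs ∧
      (ContinuousLinearMap.id ℝ (EuclideanSpace ℝ (Fin d)) + α • fderiv ℝ (gradient f) xs) v
        = (1 + α * lam) • v ∧
      1 < 1 / (1 + α * lam) := by
  have hv0 : (0:ℝ) < ‖v‖ := norm_pos_iff.mpr hv
  -- |lam| ≤ L
  have hlamL : -lam ≤ L := by
    have h1 : ‖fderiv ℝ (gradient f) xs v‖ ≤ L * ‖v‖ :=
      le_trans ((fderiv ℝ (gradient f) xs).le_opNorm v)
        (mul_le_mul_of_nonneg_right (hL xs) (norm_nonneg v))
    rw [heig, norm_smul] at h1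
    have : |lam| ≤ L := (mul_le_mul_iff_of_pos_right hv0).mp h1
    linarith [neg_abs_le lam]
  have hLpos : (0:ℝ) < L := lt_of_lt_of_le (by linarith) hlamL
  have hαL : α * L < 1 := by
    rw [lt_div_iff₀ hLpos] at hα; linarith
  have hpos : (0:ℝ) < 1 + α * lam := by nlinarith
  -- differentiability and Lipschitz of gradient
  have hgrad : ∀ y, gradient f y = (InnerProductSpace.toDual ℝ _).symm (fderiv ℝ f y) :=
    fun y => rfl
  have hdf : ContDiff ℝ 1 (fderiv ℝ f) := hf.fderiv_right (by norm_num)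
  have hdiffg : Differentiable ℝ (gradient f) := by
    have : Differentiable ℝ (fderiv ℝ f) := hdf.differentiable one_ne_zero
    exact fun y => ((InnerProductSpace.toDual ℝ
      (EuclideanSpace ℝ (Fin d))).symm.differentiable.differentiableAt).comp y (this y)
  have hlip : ∀ y z : EuclideanSpace ℝ (Fin d),
      ‖gradient f y - gradient f z‖ ≤ L * ‖y - z‖ := fun y z =>
    Convex.norm_image_sub_le_of_norm_fderiv_le (fun x _ => hdiffg x)
      (fun x _ => hL x) convex_univ (Set.mem_univ z) (Set.mem_univ y)
  -- part 1
  have hdifff : Differentiable ℝ f := hf.differentiable two_ne_zero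
  have part1 : g xs = xs := by
    set u := g xs - xs with hu
    set φ : ℝ → ℝ := fun t => f (xs + t • u) + L / 2 * t ^ 2 * ‖u‖ ^ 2 with hφ
    have hderiv : ∀ t : ℝ, HasDerivAt φ
        (⟪gradient f (xs + t • u), u⟫ + L * t * ‖u‖ ^ 2) t := by
      intro t
      have hc : HasDerivAt (fun t : ℝ => xs + t • u) u t := by
        simpa using ((hasDerivAt_id t).smul_const u).const_add xs
      have h1 : HasDerivAt (fun t : ℝ => f (xs + t • u))
          (fderiv ℝ f (xs + t • u) u) t :=
        (hdifff (xs + t • u)).hasFDerivAt.comp_hasDerivAt t hc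
      have h2 : HasDerivAt (fun t : ℝ => L / 2 * t ^ 2 * ‖u‖ ^ 2)
          (L * t * ‖u‖ ^ 2) t := by
        have := ((hasDerivAt_pow 2 t).const_mul (L / 2)).mul_const (‖u‖ ^ 2)
        exact this.congr_deriv (by rw [show (2:ℕ) - 1 = 1 from rfl]; push_cast; ring)
      have : ⟪gradient f (xs + t • u), u⟫ = fderiv ℝ f (xs + t • u) u := by
        rw [hgrad, InnerProductSpace.toDual_symm_apply]
      rw [hφ, this]
      exact h1.add h2
    have hderiv_nonneg : ∀ t ∈ Set.Icc (0:ℝ) 1,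
        0 ≤ ⟪gradient f (xs + t • u), u⟫ + L * t * ‖u‖ ^ 2 := by
      intro t ht
      have ht0 : 0 ≤ t := ht.1
      have hbound : ‖gradient f (xs + t • u)‖ ≤ L * (t * ‖u‖) := by
        have := hlip (xs + t • u) xs
        rw [hcrit, sub_zero] at this
        simpa [norm_smul, abs_of_nonneg ht0] using this
      have hinner : -(L * (t * ‖u‖) * ‖u‖) ≤ ⟪gradient f (xs + t • u), u⟫ := by
        have h := abs_real_inner_le_norm (gradient f (xs + t • u)) u
        have h2 : ‖gradient f (xs + t • u)‖ * ‖u‖ ≤ L * (t * ‖u‖) * ‖u‖ :=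
          mul_le_mul_of_nonneg_right hbound (norm_nonneg u)
        have := neg_abs_le ⟪gradient f (xs + t • u), u⟫
        linarith [abs_le.mp h]
      nlinarith [norm_nonneg u]
    have hmono : MonotoneOn φ (Set.Icc (0:ℝ) 1) := by
      exact monotoneOn_of_deriv_nonneg (convex_Icc 0 1)
        (fun t _ => (hderiv t).continuousAt.continuousWithinAt)
        (fun t _ => (hderiv t).differentiableAt.differentiableWithinAt)
        (fun t ht => by
          rw [(hderiv t).deriv]
          rw [interior_Icc] at ht
          exact hderiv_nonneg t (Set.mem_Icc_of_Ioo ht))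
    have h01 : φ 0 ≤ φ 1 := hmono (Set.left_mem_Icc.mpr zero_le_one)
      (Set.right_mem_Icc.mpr zero_le_one) zero_le_one
    have hφ0 : φ 0 = f xs := by simp [hφ]
    have hφ1 : φ 1 = f (g xs) + L / 2 * ‖u‖ ^ 2 := by simp [hφ, hu]
    -- from minimality
    have hmin' := isMinOn_iff.mp (hg xs) xs (Set.mem_univ xs)
    simp only [sub_self, norm_zero] at hmin'
    have hxsu : ‖xs - g xs‖ = ‖u‖ := by rw [hu, ← norm_neg]; congr 1; abel
    rw [hxsu] at hmin'
    have hkey : (1 / (2 * α) - L / 2) * ‖u‖ ^ 2 ≤ 0 := by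
      rw [hφ0, hφ1] at h01
      nlinarith
    have hc : 0 < 1 / (2 * α) - L / 2 := by
      rw [lt_div_iff₀ hLpos] at hα
      have h2α : (0:ℝ) < 2 * α := by linarith
      rw [sub_pos, lt_div_iff₀ h2α]
      nlinarith
    have hsq : ‖u‖ ^ 2 ≤ 0 := by
      rcases le_or_gt (‖u‖ ^ 2) 0 with h | h
      · exact h
      · exact absurd hkey (not_le.mpr (mul_pos hc h))
    have hu0 : ‖u‖ = 0 := by
      have := sq_nonneg ‖u‖
      have h2 : ‖u‖ ^ 2 = 0 := le_antisymm hsq (sq_nonneg _)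
      exact pow_eq_zero_iff two_ne_zero |>.mp h2
    have : u = 0 := norm_eq_zero.mp hu0
    rw [hu] at this
    exact sub_eq_zero.mp this
  refine ⟨part1, ?_, ?_⟩
  · simp [heig, smul_smul, add_smul, one_smul]
  · exact one_lt_one_div hpos (by nlinarith)
end

section
/- Let H be symmetric with ‖H_{S_i}‖ ≤ L_b for each block S_i (submatrix indexed by S_i), and 0 < α < 1/L_b. Then each matrix I − αP_{S_i}H has d − |S_i| eigenvalues equal to 1 and its remaining eigenvalues equal those of I_{S_i} − αH_{S_i,S_i}, which are all positive; hence the block coordinate descent Jacobian ∏_i(I − αP_{S_i}H) is invertible. -/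
open Matrix Polynomial

theorem stmt_14 {d b : ℕ} (H : Matrix (Fin d) (Fin d) ℝ) (hH : H.IsSymm)
    (Lb α : ℝ) (S : Fin b → Finset (Fin d))
    (hdisj : ∀ i j, i ≠ j → Disjoint (S i) (S j))
    (hcover : ∀ l : Fin d, ∃ i, l ∈ S i)
    (hLb : ∀ i : Fin b, ∀ v : Fin d → ℝ, (∀ j, j ∉ S i → v j = 0) →
      abs (v ⬝ᵥ (H *ᵥ v)) ≤ Lb * (v ⬝ᵥ v))
    (hα0 : 0 < α) (hα : α < 1 / Lb)
    (P : Finset (Fin d) → Matrix (Fin d) (Fin d) ℝ)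
    (hP : ∀ T, P T = ∑ l ∈ T, Matrix.single l l 1) :
    (∀ i : Fin b,
      ((1 : Matrix (Fin d) (Fin d) ℝ) - α • (P (S i) * H)).charpoly
        = (X - 1) ^ (d - (S i).card) *
          ((1 : Matrix (S i) (S i) ℝ)
            - α • H.submatrix (fun a : S i => (a : Fin d)) (fun a : S i => (a : Fin d))).charpoly) ∧
    (∀ i : Fin b, ∀ μ : ℝ,
      (((1 : Matrix (S i) (S i) ℝ)
        - α • H.submatrix (fun a : S i => (a : Fin d)) (fun a : S i => (a : Fin d))).charpoly).IsRoot μ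
        → 0 < μ) ∧
    IsUnit ((List.ofFn fun i : Fin b =>
      (1 : Matrix (Fin d) (Fin d) ℝ) - α • (P (S i.rev) * H)).prod) := by
  classical
  -- basic numeric facts
  have hLbpos : 0 < Lb := by
    by_contra h
    push_neg at h
    have : (1 : ℝ) / Lb ≤ 0 := one_div_nonpos.mpr h
    linarith
  have hαLb : α * Lb < 1 := (lt_div_iff₀ hLbpos).mp hα
  -- projector multiplication formula
  have hPH : ∀ (T : Finset (Fin d)) (k l : Fin d),
      (P T * H) k l = if k ∈ T then H k l else 0 := by
    intro T k l
    rw [hP, Finset.sum_mul, Matrix.sum_apply]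
    rw [Finset.sum_congr rfl (fun m _ => ?_), Finset.sum_ite_eq]
    by_cases hkm : k = m <;> simp [hkm]
  -- Part 1 : charpoly factorization
  have part1 : ∀ i : Fin b,
      ((1 : Matrix (Fin d) (Fin d) ℝ) - α • (P (S i) * H)).charpoly
        = (X - 1) ^ (d - (S i).card) *
          ((1 : Matrix (S i) (S i) ℝ)
            - α • H.submatrix (fun a : S i => (a : Fin d)) (fun a : S i => (a : Fin d))).charpoly := by
    intro i
    set T := S i with hTdef
    let e : {x // x ∈ T} ⊕ {x // x ∉ T} ≃ Fin d := Equiv.sumCompl (· ∈ T)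
    have hre : (reindex e.symm e.symm) ((1 : Matrix (Fin d) (Fin d) ℝ) - α • (P T * H))
        = fromBlocks
            ((1 : Matrix T T ℝ)
              - α • H.submatrix (fun a : T => (a : Fin d)) (fun a : T => (a : Fin d)))
            ((-α) • H.submatrix (fun a : T => (a : Fin d)) (fun a : {x // x ∉ T} => (a : Fin d)))
            0 1 := by
      ext k l
      cases k with
      | inl k =>
        cases l with
        | inl l =>
          simp only [reindex_apply, submatrix_apply, Equiv.symm_symm, Matrix.sub_apply, Matrix.smul_apply,
            fromBlocks_apply₁₁, Equiv.sumCompl_apply_inl]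
          rw [hPH]
          simp [e, Matrix.one_apply, k.2]
        | inr l =>
          simp only [reindex_apply, submatrix_apply, Equiv.symm_symm, Matrix.sub_apply, Matrix.smul_apply,
            fromBlocks_apply₁₂, e, Equiv.sumCompl_apply_inl, Equiv.sumCompl_apply_inr]
          rw [hPH]
          have : (k : Fin d) ≠ (l : Fin d) := fun h => l.2 (h ▸ k.2)
          simp [e, Matrix.one_apply_ne this, k.2]
      | inr k =>
        cases l with
        | inl l =>
          simp only [reindex_apply, submatrix_apply, Equiv.symm_symm, Matrix.sub_apply, Matrix.smul_apply,
            fromBlocks_apply₂₁, e, Equiv.sumCompl_apply_inl, Equiv.sumCompl_apply_inr]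
          rw [hPH]
          have : (k : Fin d) ≠ (l : Fin d) := fun h => k.2 (h ▸ l.2)
          simp [e, Matrix.one_apply_ne this, k.2]
        | inr l =>
          simp only [reindex_apply, submatrix_apply, Equiv.symm_symm, Matrix.sub_apply, Matrix.smul_apply,
            fromBlocks_apply₂₂, Equiv.sumCompl_apply_inr]
          rw [hPH]
          simp [e, Matrix.one_apply, k.2]
          exact if_congr Subtype.ext_iff.symm rfl rfl
    have h1 := Matrix.charpoly_reindex (e := e.symm)
      ((1 : Matrix (Fin d) (Fin d) ℝ) - α • (P T * H))
    rw [← h1, hre, Matrix.charpoly_fromBlocks_zero₂₁]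
    have hone : (1 : Matrix {x // x ∉ T} {x // x ∉ T} ℝ).charpoly
        = (X - 1) ^ (Fintype.card {x // x ∉ T}) := by
      have h : charmatrix (1 : Matrix {x // x ∉ T} {x // x ∉ T} ℝ)
          = diagonal (fun _ => (X - 1 : ℝ[X])) := by
        ext i j
        by_cases hij : i = j
        · subst hij; simp
        · simp [charmatrix_apply_ne _ _ _ hij, Matrix.one_apply_ne hij,
            Matrix.diagonal_apply_ne _ hij]
      rw [Matrix.charpoly, h, det_diagonal, Finset.prod_const, Finset.card_univ]
    have hcard : Fintype.card {x // x ∉ T} = d - T.card := by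
      simp [Fintype.card_subtype_compl]
    rw [hone, hcard, mul_comm]
  -- Part 2 : positivity of roots
  have part2 : ∀ i : Fin b, ∀ μ : ℝ,
      (((1 : Matrix (S i) (S i) ℝ)
        - α • H.submatrix (fun a : S i => (a : Fin d)) (fun a : S i => (a : Fin d))).charpoly).IsRoot μ
        → 0 < μ := by
    intro i μ hroot
    set T := S i with hTdef
    set A := (1 : Matrix T T ℝ)
        - α • H.submatrix (fun a : T => (a : Fin d)) (fun a : T => (a : Fin d)) with hAdef
    have h1 : (A.charpoly).eval μ = ((charmatrix A).map (Polynomial.eval μ)).det := by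
      rw [Matrix.charpoly, ← Polynomial.coe_evalRingHom, RingHom.map_det]
      rfl
    have h2 : (charmatrix A).map (Polynomial.eval μ) = μ • (1 : Matrix T T ℝ) - A := by
      ext i j
      by_cases h : i = j
      · subst h; simp [charmatrix_apply_eq, Matrix.one_apply]
      · simp [charmatrix_apply_ne _ _ _ h, Matrix.one_apply_ne h]
    have hdet : (μ • (1 : Matrix T T ℝ) - A).det = 0 := by
      rw [← h2, ← h1]; exact hroot
    obtain ⟨v, hv0, hveq⟩ := Matrix.exists_mulVec_eq_zero_iff.mpr hdet
    have hAv : A *ᵥ v = μ • v := by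
      have := hveq
      rw [sub_mulVec, smul_mulVec, one_mulVec, sub_eq_zero] at this
      exact this.symm
    set w : Fin d → ℝ := fun j => if hj : j ∈ T then v ⟨j, hj⟩ else 0 with hwdef
    have hw0 : ∀ j, j ∉ T → w j = 0 := fun j hj => dif_neg hj
    have hsum : ∀ f : Fin d → ℝ, ∑ j, f j * w j = ∑ j : T, f ↑j * v j := by
      intro f
      have h1 : ∑ j ∈ T, f j * w j = ∑ j : Fin d, f j * w j :=
        Finset.sum_subset (Finset.subset_univ T) (fun x _ hx => by simp [hw0 x hx])
      rw [← h1, ← Finset.sum_coe_sort T (fun j => f j * w j)]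
      exact Finset.sum_congr rfl (fun j _ => by simp [hwdef, dif_pos j.2])
    have hq : w ⬝ᵥ w = v ⬝ᵥ v := by
      rw [dotProduct, hsum w, dotProduct]
      exact Finset.sum_congr rfl (fun j _ => by simp [hwdef, dif_pos j.2])
    have hr : w ⬝ᵥ (H *ᵥ w)
        = v ⬝ᵥ ((H.submatrix (fun a : T => (a : Fin d)) (fun a : T => (a : Fin d))) *ᵥ v) := by
      have hinner : ∀ k : T, (H *ᵥ w) ↑k
          = ((H.submatrix (fun a : T => (a : Fin d)) (fun a : T => (a : Fin d))) *ᵥ v) k := by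
        intro k
        rw [mulVec, dotProduct, hsum (fun j => H ↑k j), mulVec, dotProduct]
        rfl
      calc w ⬝ᵥ (H *ᵥ w) = ∑ j, (H *ᵥ w) j * w j := by
            rw [dotProduct]; exact Finset.sum_congr rfl (fun j _ => mul_comm _ _)
        _ = ∑ j : T, (H *ᵥ w) ↑j * v j := hsum _
        _ = ∑ j : T, v j
              * ((H.submatrix (fun a : T => (a : Fin d)) (fun a : T => (a : Fin d))) *ᵥ v) j := by
            exact Finset.sum_congr rfl (fun j _ => by rw [hinner j, mul_comm])
        _ = _ := by rw [dotProduct]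
    have hvv : 0 < v ⬝ᵥ v := by
      rcases lt_or_eq_of_le
          (Finset.sum_nonneg fun j _ => mul_self_nonneg (v j) : 0 ≤ v ⬝ᵥ v) with h | h
      · exact h
      · exact absurd (dotProduct_self_eq_zero.mp h.symm) hv0
    have habs := hLb i w hw0
    rw [hq, hr] at habs
    have hμ : μ * (v ⬝ᵥ v) = v ⬝ᵥ v
        - α * (v ⬝ᵥ ((H.submatrix (fun a : T => (a : Fin d)) (fun a : T => (a : Fin d))) *ᵥ v)) := by
      have h3 : v ⬝ᵥ (A *ᵥ v) = μ * (v ⬝ᵥ v) := by rw [hAv, dotProduct_smul]; rfl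
      rw [← h3, hAdef, sub_mulVec, smul_mulVec, one_mulVec, dotProduct_sub, dotProduct_smul]
      rfl
    obtain ⟨hr1, hr2⟩ := abs_le.mp habs
    nlinarith [mul_pos hα0 hvv]
  refine ⟨part1, part2, ?_⟩
  -- Part 3 : invertibility of the product
  have hUnit : ∀ i : Fin b, IsUnit ((1 : Matrix (Fin d) (Fin d) ℝ) - α • (P (S i) * H)) := by
    intro i
    set T := S i with hTdef
    rw [Matrix.isUnit_iff_isUnit_det, isUnit_iff_ne_zero]
    intro hdet
    obtain ⟨v, hv0, hveq⟩ := Matrix.exists_mulVec_eq_zero_iff.mpr hdet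
    have hNv : ∀ k, ((P T * H) *ᵥ v) k = if k ∈ T then (H *ᵥ v) k else 0 := by
      intro k
      rw [mulVec, dotProduct]
      by_cases hk : k ∈ T
      · rw [if_pos hk, mulVec, dotProduct]
        exact Finset.sum_congr rfl (fun l _ => by rw [hPH, if_pos hk])
      · rw [if_neg hk]
        exact Finset.sum_eq_zero (fun l _ => by rw [hPH, if_neg hk, zero_mul])
    have hveq' : ∀ k, v k = α * (if k ∈ T then (H *ᵥ v) k else 0) := by
      intro k
      have := congrFun hveq k
      rw [sub_mulVec, smul_mulVec, one_mulVec] at this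
      have h2 : v k - α * ((P T * H) *ᵥ v) k = 0 := this
      rw [hNv] at h2
      linarith
    have hsupp : ∀ k, k ∉ T → v k = 0 := by
      intro k hk
      rw [hveq' k, if_neg hk, mul_zero]
    have hvv : 0 < v ⬝ᵥ v := by
      rcases lt_or_eq_of_le
          (Finset.sum_nonneg fun j _ => mul_self_nonneg (v j) : 0 ≤ v ⬝ᵥ v) with h | h
      · exact h
      · exact absurd (dotProduct_self_eq_zero.mp h.symm) hv0
    have hqr : v ⬝ᵥ v = α * (v ⬝ᵥ (H *ᵥ v)) := by
      calc v ⬝ᵥ v = ∑ k, v k * (α * (if k ∈ T then (H *ᵥ v) k else 0)) := by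
            rw [dotProduct]; exact Finset.sum_congr rfl (fun k _ => by rw [← hveq' k])
        _ = α * ∑ k, v k * (H *ᵥ v) k := by
            rw [Finset.mul_sum]
            refine Finset.sum_congr rfl (fun k _ => ?_)
            by_cases hk : k ∈ T
            · rw [if_pos hk]; ring
            · rw [if_neg hk, hsupp k hk]; ring
        _ = α * (v ⬝ᵥ (H *ᵥ v)) := by rw [dotProduct]
    have habs := hLb i v hsupp
    obtain ⟨hr1, hr2⟩ := abs_le.mp habs
    nlinarith
  refine List.prod_isUnit ?_
  intro m hm
  rw [List.mem_ofFn] at hm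
  obtain ⟨i, rfl⟩ := hm
  exact hUnit i.rev
end

section
/- Let H be symmetric with ‖H‖ ≤ L_b on each block, z₁ ∈ ℝ^d, and z_{i+1} = (I − αP_{S_i}H)z_i with 0 < α < 1/L_b. Then z_{i+1}ᵀHz_{i+1} ≤ z_iᵀHz_i − α(2 − αL_b)‖P_{S_i}Hz_i‖² ≤ z_iᵀHz_i − α‖P_{S_i}Hz_i‖²; in particular z_iᵀHz_i is non-increasing. -/
open Matrix

theorem stmt_15 {d b : ℕ} (H : Matrix (Fin d) (Fin d) ℝ) (hH : H.IsSymm)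
    (Lb α : ℝ) (S : Fin b → Finset (Fin d))
    (hdisj : ∀ i j, i ≠ j → Disjoint (S i) (S j))
    (hcover : ∀ l : Fin d, ∃ i, l ∈ S i)
    (hLb : ∀ i : Fin b, ∀ v : Fin d → ℝ, (∀ j, j ∉ S i → v j = 0) →
      abs (v ⬝ᵥ (H *ᵥ v)) ≤ Lb * (v ⬝ᵥ v))
    (hα0 : 0 < α) (hα : α < 1 / Lb)
    (P : Finset (Fin d) → Matrix (Fin d) (Fin d) ℝ)
    (hP : ∀ T, P T = ∑ l ∈ T, Matrix.single l l 1)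
    (z : ℕ → (Fin d → ℝ))
    (hz : ∀ i : Fin b, z ((i : ℕ) + 1)
      = ((1 : Matrix (Fin d) (Fin d) ℝ) - α • (P (S i) * H)) *ᵥ z i) :
    ∀ i : Fin b,
      z ((i : ℕ) + 1) ⬝ᵥ (H *ᵥ z ((i : ℕ) + 1))
          ≤ z i ⬝ᵥ (H *ᵥ z i)
            - α * (2 - α * Lb) * ((P (S i) *ᵥ (H *ᵥ z i)) ⬝ᵥ (P (S i) *ᵥ (H *ᵥ z i))) ∧
      z i ⬝ᵥ (H *ᵥ z i)
          - α * (2 - α * Lb) * ((P (S i) *ᵥ (H *ᵥ z i)) ⬝ᵥ (P (S i) *ᵥ (H *ᵥ z i)))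
        ≤ z i ⬝ᵥ (H *ᵥ z i)
            - α * ((P (S i) *ᵥ (H *ᵥ z i)) ⬝ᵥ (P (S i) *ᵥ (H *ᵥ z i))) ∧
      z ((i : ℕ) + 1) ⬝ᵥ (H *ᵥ z ((i : ℕ) + 1)) ≤ z i ⬝ᵥ (H *ᵥ z i) := by
  intro i
  -- Lb positivity
  have hLbpos : 0 < Lb := by
    by_contra h
    push_neg at h
    have : 1 / Lb ≤ 0 := by
      rcases lt_or_eq_of_le h with h' | h'
      · exact le_of_lt (div_neg_of_pos_of_neg one_pos h')
      · simp [h']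
    linarith
  have hαLb : α * Lb < 1 := (lt_div_iff₀ hLbpos).mp hα
  set T := S i with hT
  set w : Fin d → ℝ := H *ᵥ z i with hw
  set p : Fin d → ℝ := P T *ᵥ w with hp
  have hpj : ∀ j, p j = if j ∈ T then w j else 0 := by
    intro j
    simp only [hp, hP, Matrix.mulVec, dotProduct, Matrix.sum_apply,
      Matrix.single, Matrix.of_apply, Finset.sum_mul, ite_mul, one_mul, zero_mul]
    rw [Finset.sum_comm]
    simp [ite_and, Finset.sum_ite_eq]
  have hsupp : ∀ j, j ∉ T → p j = 0 := fun j hj => by simp [hpj j, hj]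
  have hpw : p ⬝ᵥ w = p ⬝ᵥ p := by
    simp only [dotProduct]
    apply Finset.sum_congr rfl
    intro j _
    by_cases hj : j ∈ T
    · rw [hpj j]; simp [hj]
    · simp [hsupp j hj]
  have hpp0 : 0 ≤ p ⬝ᵥ p := Finset.sum_nonneg fun j _ => mul_self_nonneg _
  have hpHp : p ⬝ᵥ (H *ᵥ p) ≤ Lb * (p ⬝ᵥ p) :=
    le_trans (le_abs_self _) (hLb i p hsupp)
  have hz' : z ((i : ℕ) + 1) = z i - α • p := by
    rw [hz i, Matrix.sub_mulVec, Matrix.one_mulVec, Matrix.smul_mulVec,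
      ← Matrix.mulVec_mulVec]
  have hsym : z i ⬝ᵥ (H *ᵥ p) = p ⬝ᵥ w := by
    rw [hw, Matrix.dotProduct_mulVec, ← Matrix.mulVec_transpose, hH.eq, dotProduct_comm]
  -- expand quadratic
  have hexp : z ((i : ℕ) + 1) ⬝ᵥ (H *ᵥ z ((i : ℕ) + 1))
      = z i ⬝ᵥ w - 2 * α * (p ⬝ᵥ p) + α * α * (p ⬝ᵥ (H *ᵥ p)) := by
    rw [hz', Matrix.mulVec_sub, Matrix.mulVec_smul, sub_dotProduct, dotProduct_sub,
      dotProduct_sub, smul_dotProduct, dotProduct_smul, dotProduct_smul,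
      smul_dotProduct, hsym]
    have h1 : p ⬝ᵥ w = p ⬝ᵥ p := hpw
    simp only [smul_eq_mul, ← hw]
    rw [hpw]
    ring
  have hαα : α * α * (p ⬝ᵥ (H *ᵥ p)) ≤ α * α * (Lb * (p ⬝ᵥ p)) := by
    have : (0:ℝ) ≤ α * α := mul_self_nonneg α
    nlinarith
  have key : (0:ℝ) ≤ α * (1 - α * Lb) * (p ⬝ᵥ p) :=
    mul_nonneg (mul_nonneg hα0.le (by linarith)) hpp0
  refine ⟨?_, ?_, ?_⟩
  · rw [hexp]; nlinarith
  · nlinarith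
  · rw [hexp]; nlinarith [mul_nonneg hα0.le hpp0]
end

section
/- Let A be a symmetric positive definite matrix and H a symmetric matrix with a negative eigenvalue. Then for any α > 0, the matrix I − αA⁻¹H has an eigenvalue strictly greater than 1. -/
open Matrix

theorem stmt_17 {d : ℕ} (A H : Matrix (Fin d) (Fin d) ℝ)
    (hA : A.PosDef) (hH : H.IsSymm)
    (lam : ℝ) (hlam : lam < 0) (v : Fin d → ℝ) (hv : v ≠ 0)
    (heig : H *ᵥ v = lam • v)
    (α : ℝ) (hα : 0 < α) :
    ∃ μ : ℝ, 1 < μ ∧ ∃ w : Fin d → ℝ, w ≠ 0 ∧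
      ((1 : Matrix (Fin d) (Fin d) ℝ) - α • (A⁻¹ * H)) *ᵥ w = μ • w := by
  classical
  open scoped MatrixOrder in
  set S := CFC.sqrt A with hSdef
  open scoped MatrixOrder in
  have hSS : S * S = A := CFC.sqrt_mul_sqrt_self A hA.posSemidef.nonneg
  open scoped MatrixOrder in
  have hSherm : S.IsHermitian := (CFC.sqrt_nonneg A).posSemidef.1
  have hHherm : H.IsHermitian := by
    exact isHermitian_iff_isSymm.mpr hH
  have hdetA : A.det ≠ 0 := hA.det_pos.ne'
  have hdetS : IsUnit S.det := by
    have hm : S.det * S.det = A.det := by rw [← det_mul, hSS]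
    exact isUnit_iff_ne_zero.2 fun h => hdetA (by rw [← hm, h, mul_zero])
  have hSinv : S * S⁻¹ = 1 := mul_nonsing_inv _ hdetS
  have hSinv' : S⁻¹ * S = 1 := nonsing_inv_mul _ hdetS
  set M := S⁻¹ * H * S⁻¹ with hMdef
  have hMherm : M.IsHermitian := by
    have h1 : S⁻¹ᴴ = S⁻¹ := by rw [conjTranspose_nonsing_inv, hSherm.eq]
    show Mᴴ = M
    rw [hMdef, conjTranspose_mul, conjTranspose_mul, h1, hHherm.eq, mul_assoc]
  -- M has a negative eigenvalue
  have hvv : 0 < v ⬝ᵥ v := by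
    have h1 : v ⬝ᵥ v ≠ 0 := fun h => hv (dotProduct_self_eq_zero.mp h)
    have h2 : 0 ≤ v ⬝ᵥ v := Finset.sum_nonneg fun i _ => mul_self_nonneg _
    exact lt_of_le_of_ne h2 (Ne.symm h1)
  have hex : ∃ i, hMherm.eigenvalues i < 0 := by
    by_contra hno
    push_neg at hno
    have hpsd : M.PosSemidef := hMherm.posSemidef_iff_eigenvalues_nonneg.mpr hno
    have hx := hpsd.dotProduct_mulVec_nonneg (S *ᵥ v)
    have hcalc : star (S *ᵥ v) ⬝ᵥ M *ᵥ (S *ᵥ v) = lam * (v ⬝ᵥ v) := by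
      have hMS : M * S = S⁻¹ * H := by
        rw [hMdef, mul_assoc, hSinv', mul_one]
      have h1 : M *ᵥ (S *ᵥ v) = lam • (S⁻¹ *ᵥ v) := by
        rw [mulVec_mulVec, hMS, ← mulVec_mulVec, heig, mulVec_smul]
      have h2 : (S *ᵥ v) ⬝ᵥ (S⁻¹ *ᵥ v) = v ⬝ᵥ v := by
        have hSt : Sᵀ = S := by
          rw [← conjTranspose_eq_transpose_of_trivial, hSherm.eq]
        have hSv : S *ᵥ v = v ᵥ* S := by
          rw [← mulVec_transpose, hSt]
        rw [hSv, ← dotProduct_mulVec, mulVec_mulVec, hSinv, one_mulVec]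
      rw [star_trivial, h1, dotProduct_smul, smul_eq_mul, h2]
    rw [hcalc] at hx
    nlinarith
  obtain ⟨i, hi⟩ := hex
  set c := hMherm.eigenvalues i with hc
  set u : Fin d → ℝ := ⇑(hMherm.eigenvectorBasis i) with hu
  have hMu : M *ᵥ u = c • u := hMherm.mulVec_eigenvectorBasis i
  have hune : u ≠ 0 := by
    intro h
    apply hMherm.eigenvectorBasis.orthonormal.ne_zero i
    ext j
    exact congrFun h j
  set w : Fin d → ℝ := S⁻¹ *ᵥ u with hw
  have hwne : w ≠ 0 := by
    intro h
    apply hune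
    have := congrArg (fun x => S *ᵥ x) h
    simpa [hw, mulVec_mulVec, hSinv] using this
  refine ⟨1 - α * c, by nlinarith, w, hwne, ?_⟩
  have hAinv : A⁻¹ = S⁻¹ * S⁻¹ := by rw [← hSS, Matrix.mul_inv_rev]
  have key : (A⁻¹ * H) *ᵥ w = c • w := by
    have hcomm : (A⁻¹ * H) * S⁻¹ = S⁻¹ * M := by
      rw [hAinv, hMdef]; simp only [mul_assoc]
    calc (A⁻¹ * H) *ᵥ w = ((A⁻¹ * H) * S⁻¹) *ᵥ u := by rw [hw, mulVec_mulVec]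
      _ = (S⁻¹ * M) *ᵥ u := by rw [hcomm]
      _ = S⁻¹ *ᵥ (M *ᵥ u) := (mulVec_mulVec _ _ _).symm
      _ = c • w := by rw [hMu, mulVec_smul, hw]
  rw [sub_mulVec, one_mulVec, smul_mulVec, key, smul_smul, sub_smul, one_smul]
end

section
/- Let g : ℝ^d → ℝ^d be C¹ with det(Dg(x)) ≠ 0 for all x, and suppose every point of a set A of fixed points of g has an open neighborhood B such that ∩_{k≥0} g^{−k}(B) has Lebesgue measure zero. Then the set W = {x₀ : the sequence g^k(x₀) converges to a point of A} has Lebesgue measure zero, provided A can be covered by countably many such neighborhoods. -/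
open MeasureTheory Filter Set

lemma preimage_null_aux {d : ℕ} (g : EuclideanSpace ℝ (Fin d) → EuclideanSpace ℝ (Fin d))
    (hg : ContDiff ℝ 1 g)
    (hdet : ∀ x, (fderiv ℝ g x).det ≠ 0)
    {s : Set (EuclideanSpace ℝ (Fin d))} (hs : volume s = 0) :
    volume (g ⁻¹' s) = 0 := by
  obtain ⟨s', hss', hs'meas, hs'null⟩ := exists_measurable_superset_of_null hs
  have hsub : g ⁻¹' s ⊆ g ⁻¹' s' := preimage_mono hss'
  refine measure_mono_null hsub ?_
  -- for each x, an open neighborhood on which g is injective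
  have hinj : ∀ x : EuclideanSpace ℝ (Fin d), ∃ U : Set (EuclideanSpace ℝ (Fin d)),
      IsOpen U ∧ x ∈ U ∧ Set.InjOn g U := by
    intro x
    have hstrict : HasStrictFDerivAt g (fderiv ℝ g x) x :=
      (hg.contDiffAt).hasStrictFDerivAt one_ne_zero
    set e := (fderiv ℝ g x).toContinuousLinearEquivOfDetNeZero (hdet x) with he
    have hcoe : (e : EuclideanSpace ℝ (Fin d) →L[ℝ] EuclideanSpace ℝ (Fin d))
        = fderiv ℝ g x := ContinuousLinearMap.coe_toContinuousLinearEquivOfDetNeZero _ _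
    have hstrict' : HasStrictFDerivAt g
        (e : EuclideanSpace ℝ (Fin d) →L[ℝ] EuclideanSpace ℝ (Fin d)) x := by
      rw [hcoe]; exact hstrict
    let P := hstrict'.toOpenPartialHomeomorph g
    refine ⟨P.source, P.open_source, hstrict'.mem_toOpenPartialHomeomorph_source, ?_⟩
    have : Set.InjOn P P.source := P.injOn
    have hPg : ∀ y, P y = g y := fun y => congrFun hstrict'.toOpenPartialHomeomorph_coe y
    intro a ha b hb hab
    exact this ha hb (by rw [hPg a, hPg b]; exact hab)
  choose U hUopen hxU hUinj using hinj
  obtain ⟨t, htc, htcov⟩ := TopologicalSpace.countable_cover_nhds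
    (fun x => (hUopen x).mem_nhds (hxU x))
  have hcover : g ⁻¹' s' = ⋃ x ∈ t, (g ⁻¹' s' ∩ U x) := by
    ext y
    simp only [Set.mem_iUnion, Set.mem_inter_iff, Set.mem_preimage]
    constructor
    · intro hy
      have : y ∈ ⋃ x ∈ t, U x := htcov ▸ Set.mem_univ y
      obtain ⟨x, hx, hyx⟩ := Set.mem_iUnion₂.mp this
      exact ⟨x, hx, hy, hyx⟩
    · rintro ⟨x, _, hy, _⟩; exact hy
  rw [hcover]
  refine (measure_biUnion_null_iff htc).mpr ?_
  intro x hx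
  -- the set g⁻¹' s' ∩ U x is null
  set m := g ⁻¹' s' ∩ U x with hm
  have hmmeas : MeasurableSet m :=
    (hs'meas.preimage hg.continuous.measurable).inter (hUopen x).measurableSet
  have hmd : ∀ y ∈ m, HasFDerivWithinAt g (fderiv ℝ g y) m y := fun y _ =>
    ((hg.differentiable one_ne_zero).differentiableAt.hasFDerivAt).hasFDerivWithinAt
  have hminj : Set.InjOn g m := (hUinj x).mono Set.inter_subset_right
  have hkey : ∫⁻ y in m, ENNReal.ofReal |(fderiv ℝ g y).det| ∂volume = volume (g '' m) :=
    lintegral_abs_det_fderiv_eq_addHaar_image volume hmmeas hmd hminj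
  have himg : volume (g '' m) = 0 := by
    refine measure_mono_null ?_ hs'null
    rintro _ ⟨y, hy, rfl⟩
    exact hy.1
  rw [himg] at hkey
  have hcont : Continuous fun y => ENNReal.ofReal |(fderiv ℝ g y).det| :=
    (ENNReal.continuous_ofReal.comp
      ((continuous_abs.comp (ContinuousLinearMap.continuous_det.comp
        (hg.continuous_fderiv one_ne_zero)))))
  have hae := (setLIntegral_eq_zero_iff hmmeas hcont.measurable).mp hkey
  have hne : ∀ y : EuclideanSpace ℝ (Fin d), ENNReal.ofReal |(fderiv ℝ g y).det| ≠ 0 := by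
    intro y
    simp only [ne_eq, ENNReal.ofReal_eq_zero, not_le]
    exact abs_pos.mpr (hdet y)
  have hmeq : m = {y | ¬ (y ∈ m → ENNReal.ofReal |(fderiv ℝ g y).det| = 0)} := by
    ext y
    simp only [Set.mem_setOf_eq]
    constructor
    · intro h himp
      exact hne y (himp h)
    · intro h
      by_contra hy
      exact h (fun hy' => absurd hy' hy)
  rw [hmeq]
  exact ae_iff.mp hae

theorem stmt_18 {d : ℕ} (g : EuclideanSpace ℝ (Fin d) → EuclideanSpace ℝ (Fin d))
    (hg : ContDiff ℝ 1 g)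
    (hdet : ∀ x, (fderiv ℝ g x).det ≠ 0)
    (A : Set (EuclideanSpace ℝ (Fin d)))
    (hfix : ∀ a ∈ A, g a = a)
    (B : ℕ → Set (EuclideanSpace ℝ (Fin d)))
    (hBopen : ∀ n, IsOpen (B n))
    (hcover : A ⊆ ⋃ n, B n)
    (hnull : ∀ n, volume (⋂ k : ℕ, g^[k] ⁻¹' (B n)) = 0) :
    volume {x₀ | ∃ a ∈ A, Tendsto (fun k => g^[k] x₀) atTop (nhds a)} = 0 := by
  set N : ℕ → Set (EuclideanSpace ℝ (Fin d)) := fun n => ⋂ k : ℕ, g^[k] ⁻¹' (B n) with hN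
  have hiter : ∀ n j, volume (g^[j] ⁻¹' N n) = 0 := by
    intro n j
    induction j with
    | zero => simpa using hnull n
    | succ j ih =>
      rw [Function.iterate_succ, Set.preimage_comp]
      exact preimage_null_aux g hg hdet ih
  have hsubset : {x₀ | ∃ a ∈ A, Tendsto (fun k => g^[k] x₀) atTop (nhds a)}
      ⊆ ⋃ n, ⋃ j, g^[j] ⁻¹' N n := by
    rintro x₀ ⟨a, haA, htend⟩
    obtain ⟨n, hn⟩ := Set.mem_iUnion.mp (hcover haA)
    have hev : ∀ᶠ k in atTop, g^[k] x₀ ∈ B n :=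
      htend.eventually ((hBopen n).mem_nhds hn |> eventually_mem_nhds_iff.mpr
        |> fun _ => (hBopen n).mem_nhds hn |> Filter.eventually_iff_exists_mem.mpr ∘ fun h => ⟨B n, h, fun y hy => hy⟩)
    obtain ⟨j, hj⟩ := (Filter.eventually_atTop.mp hev)
    refine Set.mem_iUnion.mpr ⟨n, Set.mem_iUnion.mpr ⟨j, ?_⟩⟩
    simp only [Set.mem_preimage, hN, Set.mem_iInter]
    intro k
    rw [← Function.iterate_add_apply]
    exact hj (k + j) (Nat.le_add_left j k)
  refine measure_mono_null hsubset ?_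
  exact measure_iUnion_null fun n => measure_iUnion_null fun j => hiter n j
end
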